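/- arXiv:2212.13687 — 3 statements merged into one kernel-verified Lean document; each statement's English description precedes it below -/
import Mathlib

section
/- For every real number α with α/(2π) ∉ ℤ, the symmetric limit lim_{M → ∞} ∑_{k=−M}^{M} 1/(2kπ + α) exists and equals (1/2)·cot(α/2). -/
open Finset Filter Real

section Aux
open Complex MeasureTheory intervalIntegral



private lemma integral_aux (β : ℝ) (n : ℤ) (hm : (β : ℂ) - n ≠ 0) (hp : (β : ℂ) + n ≠ 0) :
    ∫ x in (0:ℝ)..(2*π), (fourier (-n) (x : AddCircle (2*π)) : ℂ) * Complex.cos (β * (x - π)) =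
      2 * Real.sin (π * β) * β / ((β : ℂ)^2 - (n : ℂ)^2) := by
  have hπc : (π : ℂ) ≠ 0 := Complex.ofReal_ne_zero.mpr Real.pi_ne_zero
  set c1 : ℂ := I * ((β : ℂ) - n) with hc1def
  set c2 : ℂ := -(I * ((β : ℂ) + n)) with hc2def
  have hc1 : c1 ≠ 0 := mul_ne_zero I_ne_zero hm
  have hc2 : c2 ≠ 0 := neg_ne_zero.mpr (mul_ne_zero I_ne_zero hp)
  have hpt : Set.EqOn
      (fun x : ℝ => (fourier (-n) (x : AddCircle (2*π)) : ℂ) * Complex.cos (β * (x - π)))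
      (fun x : ℝ => Complex.exp (-(I*β*π))/2 * Complex.exp (c1 * x)
        + Complex.exp (I*β*π)/2 * Complex.exp (c2 * x)) (Set.uIcc 0 (2*π)) := by
    intro x _
    simp only [fourier_coe_apply]
    rw [Complex.cos]
    rw [show (2 * ↑π * I * ((-n : ℤ) : ℂ) * ↑x / ((2 * π : ℝ) : ℂ) : ℂ) = -((n:ℂ) * x) * I by
      push_cast; field_simp]
    rw [← mul_div_assoc, mul_add, ← Complex.exp_add, ← Complex.exp_add]
    rw [show -((n:ℂ)*x)*I + (β:ℂ)*((x:ℂ) - π)*I = -(I*β*π) + c1 * x by rw [hc1def]; ring]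
    rw [show -((n:ℂ)*x)*I + -((β:ℂ)*((x:ℂ) - π))*I = I*β*π + c2 * x by rw [hc2def]; ring]
    rw [Complex.exp_add, Complex.exp_add]
    ring
  rw [intervalIntegral.integral_congr hpt]
  have hint : ∀ c d : ℂ, IntervalIntegrable (fun x : ℝ => c * Complex.exp (d * x))
      volume 0 (2*π) := by
    intro c d
    apply Continuous.intervalIntegrable
    fun_prop
  rw [intervalIntegral.integral_add (hint _ c1) (hint _ c2),
    intervalIntegral.integral_const_mul, intervalIntegral.integral_const_mul,
    integral_exp_mul_complex hc1, integral_exp_mul_complex hc2]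
  push_cast
  simp only [mul_zero, Complex.exp_zero]
  have E1 : Complex.exp (c1 * (2 * (π:ℂ))) = Complex.exp (I*β*π) * Complex.exp (I*β*π) := by
    rw [← Complex.exp_add,
      show c1 * (2 * (π:ℂ)) = (I*β*π + I*β*π) + ((-n : ℤ) : ℂ) * (2*π*I) by
        rw [hc1def]; push_cast; ring,
      Complex.exp_add, Complex.exp_int_mul_two_pi_mul_I, mul_one, Complex.exp_add]
  have E2 : Complex.exp (c2 * (2 * (π:ℂ))) = Complex.exp (-(I*β*π)) * Complex.exp (-(I*β*π)) := by
    rw [← Complex.exp_add,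
      show c2 * (2 * (π:ℂ)) = (-(I*β*π) + -(I*β*π)) + ((-n : ℤ) : ℂ) * (2*π*I) by
        rw [hc2def]; push_cast; ring,
      Complex.exp_add, Complex.exp_int_mul_two_pi_mul_I, mul_one, Complex.exp_add]
  have E3 : Complex.sin ((π:ℂ) * (β:ℂ))
      = (Complex.exp (-(I*β*π)) - Complex.exp (I*β*π)) * I / 2 := by
    rw [Complex.sin]
    ring_nf
  rw [E1, E2, E3]
  set u : ℂ := Complex.exp (I*β*π) with hu
  have hu0 : u ≠ 0 := Complex.exp_ne_zero _
  have hneg : Complex.exp (-(I*β*π)) = u⁻¹ := by rw [hu, ← Complex.exp_neg]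
  rw [hneg, hc1def, hc2def]
  have hsq : (β : ℂ)^2 - (n : ℂ)^2 = ((β:ℂ) - n) * ((β:ℂ) + n) := by ring
  rw [hsq]
  simp only [div_neg, div_mul_eq_div_div, Complex.div_I]
  field_simp [hu0, hm, hp]
  have hD : u ^ 3 * (β:ℂ) ^ 2 * 4 - u ^ 3 * (n:ℂ) ^ 2 * 4 ≠ 0 := by
    have h4 : u ^ 3 * (β:ℂ) ^ 2 * 4 - u ^ 3 * (n:ℂ) ^ 2 * 4
        = 4 * u ^ 3 * (((β:ℂ) - n) * ((β:ℂ) + n)) := by ring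
    rw [h4]
    exact mul_ne_zero (mul_ne_zero (by norm_num) (pow_ne_zero _ hu0)) (mul_ne_zero hm hp)
  ring



private lemma coeff_eq [Fact (0 < 2*π)] (β : ℝ) (hβ : ∀ k : ℤ, β ≠ (k : ℝ)) (n : ℤ) :
    fourierCoeff (AddCircle.liftIco (2*π) 0 (fun x : ℝ => Complex.cos (β*(x-π)))) n
      = ((Real.sin (π*β)/π * (β/(β^2 - (n:ℝ)^2)) : ℝ) : ℂ) := by
  have hπc : (π : ℂ) ≠ 0 := Complex.ofReal_ne_zero.mpr Real.pi_ne_zero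
  have hm' : β - (n:ℝ) ≠ 0 := sub_ne_zero.mpr (hβ n)
  have hp' : β + (n:ℝ) ≠ 0 := by
    intro h
    exact hβ (-n) (by push_cast; linarith)
  have hm : (β:ℂ) - n ≠ 0 := by
    have := Complex.ofReal_ne_zero.mpr hm'
    push_cast at this
    exact this
  have hp : (β:ℂ) + n ≠ 0 := by
    have := Complex.ofReal_ne_zero.mpr hp'
    push_cast at this
    exact this
  have hD : (β:ℂ)^2 - (n:ℂ)^2 ≠ 0 := by
    have h4 : (β:ℂ)^2 - (n:ℂ)^2 = ((β:ℂ) - n) * ((β:ℂ) + n) := by ring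
    rw [h4]
    exact mul_ne_zero hm hp
  rw [fourierCoeff_eq_intervalIntegral _ n 0]
  simp only [zero_add]
  have hI : (∫ x in (0:ℝ)..(2*π),
        (fourier (-n) (x : AddCircle (2*π)) : ℂ) • (AddCircle.liftIco (2*π) 0
          (fun x : ℝ => Complex.cos (β*(x-π)))) x)
      = ∫ x in (0:ℝ)..(2*π),
        (fourier (-n) (x : AddCircle (2*π)) : ℂ) * Complex.cos (β*(x-π)) := by
    apply intervalIntegral.integral_congr_ae
    have h1 : ∀ᵐ x : ℝ, x ≠ 2*π := by
      rw [MeasureTheory.ae_iff]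
      have h0 : MeasureTheory.volume ({2*π} : Set ℝ) = 0 := Real.volume_singleton
      convert h0 using 2
      ext x
      simp [not_not]
    filter_upwards [h1] with x hx hx2
    rw [Set.uIoc_of_le (by positivity : (0:ℝ) ≤ 2*π)] at hx2
    have hxI : x ∈ Set.Ico (0:ℝ) (2*π) := ⟨hx2.1.le, lt_of_le_of_ne hx2.2 hx⟩
    rw [AddCircle.liftIco_zero_coe_apply hxI, smul_eq_mul]
  rw [hI, integral_aux β n hm hp]
  rw [Complex.real_smul]
  push_cast
  field_simp




private lemma summable_aux (β : ℝ) : Summable (fun n : ℤ => β / (β^2 - (n:ℝ)^2)) := by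
  have base : Summable (fun n : ℕ => β / (β^2 - (n:ℝ)^2)) := by
    apply Summable.of_norm_bounded_eventually_nat (g := fun n : ℕ => 2*|β| * (1/(n:ℝ)^2))
      ((summable_one_div_nat_pow.mpr one_lt_two).mul_left _)
    filter_upwards [eventually_ge_atTop ⌈2*|β|+1⌉₊] with n hn
    have h1 : 2*|β| + 1 ≤ (n:ℝ) := le_trans (Nat.le_ceil _) (Nat.cast_le.mpr hn)
    have hb := abs_nonneg β
    have hb2 := _root_.sq_abs β
    have h2 : 2*β^2 + 1 ≤ (n:ℝ)^2 := by nlinarith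
    have hn0 : (0:ℝ) < (n:ℝ)^2 := by nlinarith
    rw [norm_div, Real.norm_eq_abs, Real.norm_eq_abs]
    have h4 : |β^2 - (n:ℝ)^2| = (n:ℝ)^2 - β^2 := by
      rw [abs_of_nonpos (by nlinarith)]; ring
    rw [h4, mul_one_div, div_le_div_iff₀ (by nlinarith) hn0]
    nlinarith
  refine Summable.of_nat_of_neg base (base.congr fun n => ?_)
  push_cast
  ring_nf

private lemma cot_hasSum (β : ℝ) (hβ : ∀ k : ℤ, β ≠ (k : ℝ)) :
    HasSum (fun n : ℤ => β / (β^2 - (n:ℝ)^2)) (π * Real.cos (π*β) / Real.sin (π*β)) := by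
  haveI : Fact (0 < 2*π) := ⟨by positivity⟩
  set f : ℝ → ℂ := fun x => Complex.cos (β*(x-π)) with hf
  have hend : f 0 = f (2*π) := by
    simp only [hf]
    push_cast
    rw [show (β:ℂ)*(0 - π) = -((β:ℂ)*(2*π - π)) by ring, Complex.cos_neg]
  have hcont : ContinuousOn f (Set.Icc 0 (2*π)) := Continuous.continuousOn (by fun_prop)
  set F : C(AddCircle (2*π), ℂ) :=
    ⟨AddCircle.liftIco (2*π) 0 f, AddCircle.liftIco_zero_continuous hend hcont⟩ with hF
  have hcoeff : ∀ n : ℤ,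
      fourierCoeff (⇑F) n = ((Real.sin (π*β)/π * (β/(β^2 - (n:ℝ)^2)) : ℝ) : ℂ) :=
    fun n => coeff_eq β hβ n
  have hsummable : Summable (fourierCoeff (⇑F)) := by
    refine (Complex.summable_ofReal.mpr
      (((summable_aux β).mul_left (Real.sin (π*β)/π)))).congr fun n => ?_
    rw [hcoeff n]
  have hpoint := has_pointwise_sum_fourier_series_of_summable hsummable (0 : AddCircle (2*π))
  simp only [fourier_eval_zero, smul_eq_mul, mul_one] at hpoint
  have hF0 : F (0 : AddCircle (2*π)) = ((Real.cos (π*β) : ℝ) : ℂ) := by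
    have h0 : (0 : AddCircle (2*π)) = (((0:ℝ) : ℝ) : AddCircle (2*π)) := rfl
    rw [h0]
    show AddCircle.liftIco (2*π) 0 f ((0:ℝ) : AddCircle (2*π)) = _
    rw [AddCircle.liftIco_zero_coe_apply ⟨le_refl 0, by positivity⟩]
    simp only [hf]
    rw [Complex.ofReal_cos]
    push_cast
    rw [show (β:ℂ)*(0 - π) = -((π:ℂ)*β) by ring, Complex.cos_neg]
  rw [hF0] at hpoint
  have hpoint2 : HasSum (fun n : ℤ => ((Real.sin (π*β)/π * (β/(β^2 - (n:ℝ)^2)) : ℝ) : ℂ))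
      ((Real.cos (π*β) : ℝ) : ℂ) := (funext hcoeff : _ = _) ▸ hpoint
  rw [Complex.hasSum_ofReal] at hpoint2
  have hsin : Real.sin (π*β) ≠ 0 := by
    intro h
    rcases Real.sin_eq_zero_iff.mp h with ⟨k, hk⟩
    refine hβ k (mul_left_cancel₀ Real.pi_ne_zero ?_)
    linarith
  have hs : Real.sin (π*β)/π ≠ 0 := div_ne_zero hsin Real.pi_ne_zero
  have h3 := hpoint2.mul_left (Real.sin (π*β)/π)⁻¹
  simp only [inv_mul_cancel_left₀ hs] at h3
  have hv : (Real.sin (π*β)/π)⁻¹ * Real.cos (π*β) = π * Real.cos (π*β) / Real.sin (π*β) := by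
    field_simp
  rwa [hv] at h3

end Aux


/-- For `α` with `α/(2π) ∉ ℤ`, the symmetric limit
`lim_{M → ∞} ∑_{k=-M}^{M} 1/(2kπ + α)` exists and equals `(1/2) cot(α/2)`. -/
theorem symmetric_limit_eq_half_cot (α : ℝ)
    (hα : α / (2 * π) ∉ Set.range ((↑) : ℤ → ℝ)) :
    Filter.Tendsto
      (fun M : ℕ => ∑ k ∈ Finset.Icc (-(M : ℤ)) (M : ℤ), 1 / (2 * (k : ℝ) * π + α))
      Filter.atTop (nhds (1 / 2 * Real.cot (α / 2))) := by
  have hπ := Real.pi_pos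
  obtain ⟨β, hβdef⟩ : ∃ β : ℝ, β = α / (2 * π) := ⟨_, rfl⟩
  rw [← hβdef] at hα
  have hβ : ∀ k : ℤ, β ≠ (k : ℝ) := fun k hk => hα ⟨k, hk.symm⟩
  have hαeq : α = 2 * π * β := by rw [hβdef]; field_simp
  have hne1 : ∀ k : ℤ, β + (k:ℝ) ≠ 0 := fun k h => hβ (-k) (by push_cast; linarith)
  have hne2 : ∀ k : ℤ, β - (k:ℝ) ≠ 0 := fun k => sub_ne_zero.mpr (hβ k)
  have hkey := cot_hasSum β hβ
  have hval : π * Real.cos (π*β) / Real.sin (π*β) = π * Real.cot (α/2) := by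
    rw [Real.cot_eq_cos_div_sin, show α/2 = π*β by rw [hαeq]; ring]
    ring
  rw [hval] at hkey
  have htend : Tendsto (fun M : ℕ => Finset.Icc (-(M:ℤ)) (M:ℤ)) atTop atTop := by
    apply tendsto_atTop_finset_of_monotone
    · intro a b hab
      exact Finset.Icc_subset_Icc (neg_le_neg (Int.ofNat_le.mpr hab)) (Int.ofNat_le.mpr hab)
    · intro x
      exact ⟨x.natAbs, by simp only [Finset.mem_Icc]; omega⟩
  have h2 : Tendsto (fun M : ℕ => ∑ k ∈ Finset.Icc (-(M:ℤ)) (M:ℤ), β/(β^2 - (k:ℝ)^2))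
      atTop (nhds (π * Real.cot (α/2))) := hkey.comp htend
  have hM : ∀ M : ℕ, ∑ k ∈ Finset.Icc (-(M:ℤ)) (M:ℤ), 1/(2*(k:ℝ)*π + α)
      = (1/(2*π)) * ∑ k ∈ Finset.Icc (-(M:ℤ)) (M:ℤ), β/(β^2 - (k:ℝ)^2) := by
    intro M
    have hrefl : ∑ k ∈ Finset.Icc (-(M:ℤ)) (M:ℤ), 1/(β - (k:ℝ))
        = ∑ k ∈ Finset.Icc (-(M:ℤ)) (M:ℤ), 1/(β + (k:ℝ)) := by
      refine Finset.sum_equiv (Equiv.neg ℤ) (fun i => ?_) (fun i _ => ?_)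
      · simp only [Finset.mem_Icc, Equiv.neg_apply]
        omega
      · push_cast [Equiv.neg_apply]
        ring_nf
    have hsplit : ∑ k ∈ Finset.Icc (-(M:ℤ)) (M:ℤ), β/(β^2 - (k:ℝ)^2)
        = ∑ k ∈ Finset.Icc (-(M:ℤ)) (M:ℤ), (1/2) * (1/(β + (k:ℝ)) + 1/(β - (k:ℝ))) := by
      refine Finset.sum_congr rfl fun k _ => ?_
      have hD : β^2 - (k:ℝ)^2 = (β + k) * (β - k) := by ring
      rw [hD, div_add_div _ _ (hne1 k) (hne2 k),
        show (1:ℝ)*(β - k) + (β + k)*1 = 2*β by ring]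
      ring
    have step1 : ∑ k ∈ Finset.Icc (-(M:ℤ)) (M:ℤ), 1/(2*(k:ℝ)*π + α)
        = (1/(2*π)) * ∑ k ∈ Finset.Icc (-(M:ℤ)) (M:ℤ), 1/(β + (k:ℝ)) := by
      rw [Finset.mul_sum]
      refine Finset.sum_congr rfl fun k _ => ?_
      rw [hαeq, show 2*(k:ℝ)*π + 2*π*β = (2*π) * (β + k) by ring, ← one_div_mul_one_div]
    have step2 : ∑ k ∈ Finset.Icc (-(M:ℤ)) (M:ℤ), (1:ℝ)/2 * (1/(β + (k:ℝ)) + 1/(β - (k:ℝ)))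
        = ∑ k ∈ Finset.Icc (-(M:ℤ)) (M:ℤ), 1/(β + (k:ℝ)) := by
      rw [← Finset.mul_sum, Finset.sum_add_distrib, hrefl]
      ring
    rw [hsplit, step2]
    exact step1
  have h3 := h2.const_mul (1/(2*π))
  rw [show (1/(2*π)) * (π * Real.cot (α/2)) = 1/2 * Real.cot (α/2) by
    field_simp] at h3
  exact Tendsto.congr (fun M => (hM M).symm) h3
end

section
/- For all integers n ≥ 1 and 1 ≤ i ≤ n, the combinatorial identity b_{n,i} = i · a_{n,i} holds; that is, ∑_{l=1}^{i} (−1)^{n−l} u(n−l, n−i) Ā(2n+1, l) = i · 2 ∑_{l=1}^{i} (−1)^{n−l} t(n−l, n−i) Ā(2n, l). -/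
open Finset Filter Real

/-- The number of cyclic descents of a permutation `σ` of `{0, …, n-1}`, read cyclically:
positions `i` with `σ(i) > σ(i+1)`, indices mod `n`. -/
def cyclicDescents (n : ℕ) (σ : Equiv.Perm (Fin n)) : ℕ :=
  (Finset.univ.filter (fun i : Fin n => σ (finRotate n i) < σ i)).card

/-- The circular Eulerian number `Ā(n,l)`: the number of circular `n`-permutations with exactly
`l` descents.  Each circular permutation has exactly `n` linear representatives (all with the
same number of cyclic descents), whence the division by `n`. -/
def circEulerian (n l : ℕ) : ℕ :=
  (Finset.univ.filter (fun σ : Equiv.Perm (Fin n) => cyclicDescents n σ = l)).card / n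

/-- The coefficient `t(k,i) = (-1)^(k-i) 2^(2i) (k/(k+i)) C(k+i, k-i)` of the Chebyshev
polynomial of the first kind, with the convention `t(0,0) = 1/2`. -/
noncomputable def tCoeff (k i : ℕ) : ℝ :=
  if k = 0 ∧ i = 0 then 1 / 2
  else (-1) ^ (k - i) * 2 ^ (2 * i) * ((k : ℝ) / ((k : ℝ) + (i : ℝ))) *
    (Nat.choose (k + i) (k - i) : ℝ)

/-- The coefficient `u(k,i) = (-1)^(k-i) 2^(2i) C(k+i, k-i)` of the Chebyshev polynomial of the
second kind. -/
noncomputable def uCoeff (k i : ℕ) : ℝ :=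
  (-1) ^ (k - i) * 2 ^ (2 * i) * (Nat.choose (k + i) (k - i) : ℝ)

/-- `a_{n,i} = 2 ∑_{l=1}^{i} (-1)^(n-l) t(n-l, n-i) Ā(2n, l)`. -/
noncomputable def aCoeff (n i : ℕ) : ℝ :=
  2 * ∑ l ∈ Finset.Icc 1 i, (-1) ^ (n - l) * tCoeff (n - l) (n - i) *
    (circEulerian (2 * n) l : ℝ)

/-- `b_{n,i} = ∑_{l=1}^{i} (-1)^(n-l) u(n-l, n-i) Ā(2n+1, l)`. -/
noncomputable def bCoeff (n i : ℕ) : ℝ :=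
  ∑ l ∈ Finset.Icc 1 i, (-1) ^ (n - l) * uCoeff (n - l) (n - i) *
    (circEulerian (2 * n + 1) l : ℝ)

section CircEulerianDevelopment


open Equiv
open Fin.NatCast

variable {m : ℕ}

/-- linear descent number of a permutation of `Fin (m+1)` -/
def ldes {m : ℕ} (τ : Equiv.Perm (Fin (m + 1))) : ℕ :=
  (Finset.univ.filter (fun i : Fin m => τ i.succ < τ i.castSucc)).card

/-- Eulerian count: number of permutations of `Fin (m+1)` with `j` descents -/
def linE (m j : ℕ) : ℕ :=
  (Finset.univ.filter (fun τ : Equiv.Perm (Fin (m + 1)) => ldes τ = j)).card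

lemma card_filter_equiv {α β : Type*} [Fintype α] [Fintype β]
    (e : α ≃ β) (Q : β → Prop) [DecidablePred Q] :
    (Finset.univ.filter fun a => Q (e a)).card = (Finset.univ.filter Q).card := by
  rw [← Fintype.card_subtype, ← Fintype.card_subtype]
  exact Fintype.card_congr (e.subtypeEquiv fun a => Iff.rfl)

/-- embed a permutation of `Fin (m+1)` as a permutation of `Fin (m+2)` fixing the last point -/
def pemb {m : ℕ} (τ : Equiv.Perm (Fin (m + 1))) : Equiv.Perm (Fin (m + 2)) :=
  finSuccEquivLast.trans ((Equiv.optionCongr τ).trans finSuccEquivLast.symm)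

@[simp] lemma pemb_castSucc (τ : Equiv.Perm (Fin (m + 1))) (i : Fin (m + 1)) :
    pemb τ i.castSucc = (τ i).castSucc := by
  simp [pemb]

@[simp] lemma pemb_last (τ : Equiv.Perm (Fin (m + 1))) :
    pemb τ (Fin.last (m + 1)) = Fin.last (m + 1) := by
  simp [pemb]

lemma finRotate_castSucc {n : ℕ} (i : Fin (n + 1)) :
    finRotate (n + 2) i.castSucc = i.succ := by
  ext
  rw [finRotate_succ_apply, Fin.val_add_one_of_lt (Fin.castSucc_lt_last i)]
  simp

lemma cdes_mul_rotpow {n : ℕ} (σ : Equiv.Perm (Fin (n + 1))) (k : ℕ) :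
    cyclicDescents (n + 1) (σ * finRotate (n + 1) ^ k) = cyclicDescents (n + 1) σ := by
  unfold cyclicDescents
  have hc : ∀ x, (finRotate (n + 1) ^ k) (finRotate (n + 1) x)
      = finRotate (n + 1) ((finRotate (n + 1) ^ k) x) := by
    intro x
    have h := pow_mul_comm' (finRotate (n + 1)) k
    calc (finRotate (n + 1) ^ k) (finRotate (n + 1) x)
        = ((finRotate (n + 1) ^ k) * finRotate (n + 1)) x := rfl
      _ = (finRotate (n + 1) * finRotate (n + 1) ^ k) x := by rw [h]
      _ = _ := rfl
  have h2 : (Finset.univ.filter fun i => (σ * finRotate (n + 1) ^ k) (finRotate (n + 1) i)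
        < (σ * finRotate (n + 1) ^ k) i)
      = Finset.univ.filter fun i =>
          (fun x => σ (finRotate (n + 1) x) < σ x) ((finRotate (n + 1) ^ k) i) := by
    apply Finset.filter_congr
    intro i _
    simp only [Equiv.Perm.mul_apply, hc]
  rw [h2]
  exact card_filter_equiv (finRotate (n + 1) ^ k : Equiv.Perm (Fin (n + 1)))
    (fun x => σ (finRotate (n + 1) x) < σ x)

lemma cdes_pemb (τ : Equiv.Perm (Fin (m + 1))) :
    cyclicDescents (m + 2) (pemb τ) = ldes τ + 1 := by
  unfold cyclicDescents ldes
  rw [Finset.card_filter, Finset.card_filter]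
  rw [Fin.sum_univ_castSucc (n := m + 1)]
  have hlast : (if pemb τ (finRotate (m + 2) (Fin.last (m + 1))) < pemb τ (Fin.last (m + 1))
      then 1 else 0) = 1 := by
    rw [finRotate_last, if_pos]
    have h0 : (0 : Fin (m + 2)) = (0 : Fin (m + 1)).castSucc := by simp
    rw [h0, pemb_castSucc, pemb_last]
    exact Fin.castSucc_lt_last _
  rw [hlast]
  congr 1
  have hstep : ∀ i : Fin (m + 1),
      (if pemb τ (finRotate (m + 2) i.castSucc) < pemb τ i.castSucc then 1 else 0)
        = (if pemb τ i.succ < (τ i).castSucc then (1 : ℕ) else 0) := by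
    intro i
    rw [finRotate_castSucc, pemb_castSucc]
  rw [Finset.sum_congr rfl fun i _ => hstep i]
  rw [Fin.sum_univ_castSucc (n := m)]
  have hl2 : (if pemb τ (Fin.last m).succ < (τ (Fin.last m)).castSucc then (1:ℕ) else 0) = 0 := by
    rw [if_neg]
    rw [Fin.succ_last, pemb_last]
    exact not_lt.2 (Fin.le_last _)
  rw [hl2, add_zero]
  apply Finset.sum_congr rfl
  intro k _
  rw [Fin.succ_castSucc, pemb_castSucc, ]
  by_cases h : τ k.succ < τ k.castSucc
  · rw [if_pos (by exact Fin.castSucc_lt_castSucc_iff.2 h), if_pos h]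
  · rw [if_neg (by simpa [Fin.castSucc_lt_castSucc_iff] using h), if_neg h]


lemma rotpow_apply {n : ℕ} (j : ℕ) (x : Fin (n + 1)) :
    (finRotate (n + 1) ^ j) x = x + (j : Fin (n + 1)) := by
  induction j with
  | zero => simp
  | succ j ih =>
    rw [pow_succ', Equiv.Perm.mul_apply, ih, finRotate_succ_apply]
    push_cast
    rw [add_assoc]

lemma pemb_injective : Function.Injective (pemb (m := m)) := by
  intro τ τ' h
  apply Equiv.ext
  intro i
  have h2 := congrArg (fun σ : Equiv.Perm (Fin (m + 2)) => σ i.castSucc) h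
  simpa [Fin.castSucc_inj] using h2

def rotProd (m : ℕ) : Equiv.Perm (Fin (m + 1)) × Fin (m + 2) → Equiv.Perm (Fin (m + 2)) :=
  fun x => pemb x.1 * finRotate (m + 2) ^ (x.2 : ℕ)

lemma rotProd_injective : Function.Injective (rotProd m) := by
  rintro ⟨τ, p⟩ ⟨τ', p'⟩ h
  simp only [rotProd] at h
  have h1 := congrArg (fun σ : Equiv.Perm (Fin (m + 2)) => σ (Fin.last (m + 1) - p)) h
  simp only [Equiv.Perm.mul_apply, rotpow_apply, Fin.cast_val_eq_self] at h1
  rw [sub_add_cancel, pemb_last] at h1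
  have hyl : Fin.last (m + 1) - p + p' = Fin.last (m + 1) := by
    exact (pemb τ').injective (by rw [← h1, pemb_last])
  have hp : p' = p := by
    have h3 : Fin.last (m + 1) - p + p' = Fin.last (m + 1) - p + p := by
      rw [hyl, sub_add_cancel]
    exact add_left_cancel h3
  subst hp
  have h4 : pemb τ = pemb τ' := mul_right_cancel h
  rw [pemb_injective h4]

lemma rotProd_bijective : Function.Bijective (rotProd m) := by
  rw [Fintype.bijective_iff_injective_and_card]
  refine ⟨rotProd_injective, ?_⟩
  simp [Fintype.card_prod, Fintype.card_perm, Fintype.card_fin, Nat.factorial_succ]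
  ring

noncomputable def rotEquiv (m : ℕ) :
    Equiv.Perm (Fin (m + 1)) × Fin (m + 2) ≃ Equiv.Perm (Fin (m + 2)) :=
  Equiv.ofBijective _ rotProd_bijective

lemma card_cdes_filter (m j : ℕ) :
    (Finset.univ.filter fun σ : Equiv.Perm (Fin (m + 2)) =>
      cyclicDescents (m + 2) σ = j + 1).card = linE m j * (m + 2) := by
  classical
  rw [← card_filter_equiv (rotEquiv m) (fun σ => cyclicDescents (m + 2) σ = j + 1)]
  have h1 : (Finset.univ.filter fun x : Equiv.Perm (Fin (m + 1)) × Fin (m + 2) =>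
        cyclicDescents (m + 2) (rotEquiv m x) = j + 1)
      = (Finset.univ.filter fun τ => ldes τ = j) ×ˢ Finset.univ := by
    ext ⟨τ, p⟩
    have : rotEquiv m (τ, p) = pemb τ * finRotate (m + 2) ^ (p : ℕ) := rfl
    simp [this, cdes_mul_rotpow, cdes_pemb, Finset.mem_product]
  rw [h1, Finset.card_product, Finset.card_univ, Fintype.card_fin]
  rfl

lemma circEulerian_succ_succ (m j : ℕ) : circEulerian (m + 2) (j + 1) = linE m j := by
  unfold circEulerian
  rw [card_cdes_filter]
  exact Nat.mul_div_cancel _ (by omega)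

lemma circEulerian_zero (m : ℕ) : circEulerian (m + 2) 0 = 0 := by
  unfold circEulerian
  have h : (Finset.univ.filter fun σ : Equiv.Perm (Fin (m + 2)) =>
      cyclicDescents (m + 2) σ = 0).card = 0 := by
    rw [Finset.card_eq_zero, Finset.filter_eq_empty_iff]
    intro σ _
    unfold cyclicDescents
    intro h0
    rw [Finset.card_eq_zero, Finset.filter_eq_empty_iff] at h0
    have h1 := h0 (Finset.mem_univ (σ⁻¹ (Fin.last (m + 1))))
    rw [Equiv.Perm.inv_def, Equiv.apply_symm_apply] at h1
    have h2 : σ (finRotate (m + 2) (σ⁻¹ (Fin.last (m + 1)))) = Fin.last (m + 1) :=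
      le_antisymm (Fin.le_last _) (not_lt.mp h1)
    have h3 : finRotate (m + 2) (σ⁻¹ (Fin.last (m + 1))) = σ⁻¹ (Fin.last (m + 1)) := by
      apply σ.injective
      rw [h2, Equiv.Perm.inv_def, Equiv.apply_symm_apply]
    rw [finRotate_succ_apply] at h3
    have h4 := congrArg Fin.val h3
    rw [Fin.val_add_one] at h4
    split at h4
    next h5 => rw [h5, Fin.val_last] at h4; omega
    next => omega
  rw [h, Nat.zero_div]

lemma linE_zero (m : ℕ) : linE m 0 = 1 := by
  unfold linE
  rw [Finset.card_eq_one]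
  use 1
  ext τ
  simp only [Finset.mem_filter, Finset.mem_univ, true_and, Finset.mem_singleton]
  constructor
  · intro h
    unfold ldes at h
    rw [Finset.card_eq_zero, Finset.filter_eq_empty_iff] at h
    have hm : StrictMono τ := by
      rw [Fin.strictMono_iff_lt_succ]
      intro i
      have h5 := h (Finset.mem_univ i)
      rcases lt_or_eq_of_le (not_lt.mp h5) with h' | h'
      · exact h'
      · exact absurd (τ.injective h') (ne_of_lt (Fin.castSucc_lt_succ (i := i)))
    refine Equiv.ext fun i => Fin.ext ?_
    exact Fin.coe_orderIso_apply { toEquiv := τ, map_rel_iff' := hm.le_iff_le } i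
  · rintro rfl
    unfold ldes
    rw [Finset.card_eq_zero, Finset.filter_eq_empty_iff]
    intro i _
    simp only [Equiv.Perm.one_apply]
    exact not_lt.2 (le_of_lt (Fin.castSucc_lt_succ (i := i)))

def pins {m : ℕ} (p : Fin (m + 2)) (τ : Equiv.Perm (Fin (m + 1))) : Equiv.Perm (Fin (m + 2)) :=
  (finSuccEquiv' p).trans ((Equiv.optionCongr τ).trans finSuccEquivLast.symm)

@[simp] lemma pins_self (p : Fin (m + 2)) (τ : Equiv.Perm (Fin (m + 1))) :
    pins p τ p = Fin.last (m + 1) := by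
  simp [pins, finSuccEquiv'_at]

@[simp] lemma pins_succAbove (p : Fin (m + 2)) (τ : Equiv.Perm (Fin (m + 1)))
    (i : Fin (m + 1)) : pins p τ (p.succAbove i) = (τ i).castSucc := by
  simp [pins, finSuccEquiv'_succAbove]

/-- positions where inserting the max value keeps the descent count -/
def keepSet {m : ℕ} (τ : Equiv.Perm (Fin (m + 1))) : Finset (Fin (m + 2)) :=
  insert (Fin.last (m + 1))
    ((Finset.univ.filter (fun k : Fin m => τ k.succ < τ k.castSucc)).image
      (fun k => (k.succ).castSucc))

lemma card_keepSet (τ : Equiv.Perm (Fin (m + 1))) : (keepSet τ).card = ldes τ + 1 := by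
  unfold keepSet
  rw [Finset.card_insert_of_notMem, Finset.card_image_of_injective]
  · rfl
  · intro a b h
    exact Fin.succ_injective _ (Fin.castSucc_injective _ h)
  · intro hmem
    obtain ⟨k, -, hk⟩ := Finset.mem_image.mp hmem
    exact (Fin.castSucc_lt_last _).ne hk

lemma ldes_card (τ : Equiv.Perm (Fin (m + 1))) :
    ldes τ = ∑ i : Fin m, (if τ i.succ < τ i.castSucc then 1 else 0) := by
  unfold ldes; rw [Finset.card_filter]

lemma ldes_pins (p : Fin (m + 2)) (τ : Equiv.Perm (Fin (m + 1))) :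
    ldes (pins p τ) = if p ∈ keepSet τ then ldes τ else ldes τ + 1 := by
  by_cases hp0 : p = 0
  · subst hp0
    have hnot : (0 : Fin (m + 2)) ∉ keepSet τ := by
      unfold keepSet
      intro hmem
      rcases Finset.mem_insert.mp hmem with h | h
      · have := congrArg Fin.val h
        simp only [Fin.val_zero, Fin.val_last] at this
        omega
      · obtain ⟨k, -, hk⟩ := Finset.mem_image.mp h
        have := congrArg Fin.val hk
        simp only [Fin.coe_castSucc, Fin.val_succ, Fin.val_zero] at this
        omega
    rw [if_neg hnot]
    rw [ldes_card, ldes_card]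
    rw [Fin.sum_univ_succ]
    have h0 : (if pins 0 τ (0 : Fin (m + 1)).succ < pins 0 τ (0 : Fin (m + 1)).castSucc
        then (1 : ℕ) else 0) = 1 := by
      rw [if_pos]
      rw [Fin.castSucc_zero]
      have e1 : (0 : Fin (m + 1)).succ = (0 : Fin (m + 2)).succAbove 0 := by
        rw [Fin.zero_succAbove]
      rw [e1, pins_succAbove, pins_self]
      exact Fin.castSucc_lt_last _
    rw [h0]
    have h1 : ∀ i : Fin m,
        (if pins 0 τ (i.succ).succ < pins 0 τ (i.succ).castSucc then (1:ℕ) else 0)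
          = if τ i.succ < τ i.castSucc then 1 else 0 := by
      intro i
      have e1 : (i.succ).succ = (0 : Fin (m + 2)).succAbove i.succ := by
        rw [Fin.zero_succAbove]
      have e2 : (i.succ).castSucc = (0 : Fin (m + 2)).succAbove i.castSucc := by
        rw [Fin.zero_succAbove, Fin.succ_castSucc]
      rw [e1, e2, pins_succAbove, pins_succAbove]
      simp [Fin.castSucc_lt_castSucc_iff]
    rw [Finset.sum_congr rfl fun i _ => h1 i]
    omega
  · by_cases hpl : p = Fin.last (m + 1)
    · subst hpl
      rw [if_pos (by unfold keepSet; exact Finset.mem_insert_self _ _)]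
      rw [ldes_card, ldes_card]
      rw [Fin.sum_univ_castSucc (n := m)]
      have h0 : (if pins (Fin.last (m + 1)) τ (Fin.last m).succ
          < pins (Fin.last (m + 1)) τ (Fin.last m).castSucc then (1:ℕ) else 0) = 0 := by
        rw [if_neg]
        rw [Fin.succ_last, pins_self]
        exact not_lt.2 (Fin.le_last _)
      rw [h0, add_zero]
      apply Finset.sum_congr rfl
      intro k _
      have e1 : (k.castSucc).succ = (Fin.last (m + 1)).succAbove k.succ := by
        rw [Fin.succAbove_last_apply, Fin.succ_castSucc]
      have e2 : (k.castSucc).castSucc = (Fin.last (m + 1)).succAbove k.castSucc := by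
        rw [Fin.succAbove_last_apply]
      rw [e1, e2, pins_succAbove, pins_succAbove]
      simp [Fin.castSucc_lt_castSucc_iff]
    · -- interior case
      have hv1 : 1 ≤ p.val := by
        rcases Nat.eq_zero_or_pos p.val with h | h
        · exact absurd (Fin.ext (by simp [h])) hp0
        · exact h
      have hv2 : p.val ≤ m := by
        have hlt := p.isLt
        rcases Nat.lt_or_ge p.val (m + 1) with h | h
        · omega
        · exact absurd (Fin.ext (by simp [Fin.val_last]; omega)) hpl
      set k₀ : Fin m := ⟨p.val - 1, by omega⟩ with hk₀
      have hk0v : (k₀ : ℕ) = p.val - 1 := rfl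
      have hpk : p = (k₀.succ).castSucc := by
        apply Fin.ext
        simp only [Fin.coe_castSucc, Fin.val_succ, hk0v]
        omega
      have hmem : p ∈ keepSet τ ↔ τ k₀.succ < τ k₀.castSucc := by
        unfold keepSet
        rw [Finset.mem_insert]
        constructor
        · rintro (h | h)
          · exact absurd h hpl
          · obtain ⟨k, hk, hke⟩ := Finset.mem_image.mp h
            have hkv := congrArg Fin.val hke
            simp only [Fin.coe_castSucc, Fin.val_succ] at hkv
            have : k = k₀ := Fin.ext (by omega)
            subst this
            exact (Finset.mem_filter.mp hk).2
        · intro h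
          exact Or.inr (Finset.mem_image.mpr
            ⟨k₀, Finset.mem_filter.mpr ⟨Finset.mem_univ _, h⟩, hpk.symm⟩)
      set σ := pins p τ with hσ
      set q₁ : Fin (m + 1) := k₀.castSucc with hq₁
      have hq1v : (q₁ : ℕ) = p.val - 1 := rfl
      have hsum : ldes σ = (if σ q₁.succ < σ q₁.castSucc then 1 else 0)
          + ∑ y : Fin m, (if σ (q₁.succAbove y).succ < σ (q₁.succAbove y).castSucc
              then 1 else 0) := by
        rw [ldes_card, Fin.sum_univ_succAbove _ q₁]
      have hq1succ : q₁.succ = p := by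
        apply Fin.ext
        simp only [Fin.val_succ, hq1v]
        omega
      have h0 : (if σ q₁.succ < σ q₁.castSucc then (1:ℕ) else 0) = 0 := by
        rw [if_neg]
        rw [hq1succ, hσ, pins_self]
        exact not_lt.2 (Fin.le_last _)
      have hk0img : q₁.succAbove k₀ = k₀.succ :=
        Fin.succAbove_of_le_castSucc _ _ (le_refl _)
      have h1 : (if σ (q₁.succAbove k₀).succ < σ (q₁.succAbove k₀).castSucc
          then (1:ℕ) else 0) = 1 := by
        rw [if_pos]
        rw [hk0img]
        have e1 : (k₀.succ).castSucc = p := hpk.symm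
        have e2 : (k₀.succ).succ = p.succAbove k₀.succ :=
          (Fin.succAbove_of_le_castSucc _ _ (le_of_eq hpk)).symm
        rw [e1, e2, hσ, pins_succAbove, pins_self]
        exact Fin.castSucc_lt_last _
      have hgen : ∀ y : Fin m, y ≠ k₀ →
          (if σ (q₁.succAbove y).succ < σ (q₁.succAbove y).castSucc then (1:ℕ) else 0)
            = if τ y.succ < τ y.castSucc then 1 else 0 := by
        intro y hy
        have hyv : (y : ℕ) ≠ p.val - 1 := fun h => hy (Fin.ext (by rw [hk0v]; exact h))
        rcases Nat.lt_or_ge (y : ℕ) (p.val - 1) with h | h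
        · -- y < k₀ : position is castSucc y
          have him : q₁.succAbove y = y.castSucc :=
            Fin.succAbove_of_castSucc_lt _ _ (by
              simp only [Fin.lt_def, Fin.coe_castSucc, hq1v]; omega)
          have e1 : (y.castSucc).castSucc = p.succAbove y.castSucc :=
            (Fin.succAbove_of_castSucc_lt _ _ (by
              simp only [Fin.lt_def, Fin.coe_castSucc]; omega)).symm
          have e2 : (y.castSucc).succ = p.succAbove y.succ := by
            rw [Fin.succ_castSucc]
            exact (Fin.succAbove_of_castSucc_lt _ _ (by
              simp only [Fin.lt_def, Fin.coe_castSucc, Fin.val_succ]; omega)).symm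
          rw [him, e1, e2, hσ, pins_succAbove, pins_succAbove]
          simp [Fin.castSucc_lt_castSucc_iff]
        · -- k₀ < y : position is y.succ
          have hgt : p.val - 1 < (y : ℕ) := by omega
          have him : q₁.succAbove y = y.succ :=
            Fin.succAbove_of_le_castSucc _ _ (by
              simp only [Fin.le_def, Fin.coe_castSucc, hq1v]; omega)
          have e1 : (y.succ).castSucc = p.succAbove y.castSucc := by
            rw [← Fin.succ_castSucc]
            exact (Fin.succAbove_of_le_castSucc _ _ (by
              simp only [Fin.le_def, Fin.coe_castSucc]; omega)).symm
          have e2 : (y.succ).succ = p.succAbove y.succ :=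
            (Fin.succAbove_of_le_castSucc _ _ (by
              simp only [Fin.le_def, Fin.coe_castSucc, Fin.val_succ]; omega)).symm
          rw [him, e1, e2, hσ, pins_succAbove, pins_succAbove]
          simp [Fin.castSucc_lt_castSucc_iff]
      -- assemble
      have hsplit : ∑ y : Fin m, (if σ (q₁.succAbove y).succ < σ (q₁.succAbove y).castSucc
              then (1:ℕ) else 0)
          = 1 + ∑ y ∈ Finset.univ.erase k₀,
              (if τ y.succ < τ y.castSucc then (1:ℕ) else 0) := by
        rw [← Finset.add_sum_erase _ _ (Finset.mem_univ k₀), h1]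
        congr 1
        apply Finset.sum_congr rfl
        intro y hy
        exact hgen y (Finset.ne_of_mem_erase hy)
      have hldes : ldes τ = (if τ k₀.succ < τ k₀.castSucc then 1 else 0)
          + ∑ y ∈ Finset.univ.erase k₀, (if τ y.succ < τ y.castSucc then (1:ℕ) else 0) := by
        rw [ldes_card, ← Finset.add_sum_erase _ _ (Finset.mem_univ k₀)]
      by_cases hdes : τ k₀.succ < τ k₀.castSucc
      · rw [if_pos (hmem.mpr hdes)]
        rw [hsum, h0, hsplit, hldes, if_pos hdes]
        omega
      · rw [if_neg (fun hc => hdes (hmem.mp hc))]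
        rw [hsum, h0, hsplit, hldes, if_neg hdes]
        omega

lemma pins_injective2 : Function.Injective
    (fun x : Equiv.Perm (Fin (m + 1)) × Fin (m + 2) => pins x.2 x.1) := by
  rintro ⟨τ, p⟩ ⟨τ', p'⟩ h
  simp only at h
  have hp : p = p' := by
    have h1 : pins p' τ' p = Fin.last (m + 1) := by rw [← h, pins_self]
    have h2 : pins p' τ' p' = Fin.last (m + 1) := pins_self _ _
    exact (pins p' τ').injective (h1.trans h2.symm)
  subst hp
  have hτ : τ = τ' := by
    apply Equiv.ext
    intro i
    have h1 : pins p τ (p.succAbove i) = pins p τ' (p.succAbove i) := by rw [h]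
    rw [pins_succAbove, pins_succAbove] at h1
    exact Fin.castSucc_injective _ h1
  rw [hτ]

lemma pins_bijective2 : Function.Bijective
    (fun x : Equiv.Perm (Fin (m + 1)) × Fin (m + 2) => pins x.2 x.1) := by
  rw [Fintype.bijective_iff_injective_and_card]
  refine ⟨pins_injective2, ?_⟩
  simp [Fintype.card_prod, Fintype.card_perm, Fintype.card_fin, Nat.factorial_succ]
  ring

noncomputable def pinsEquiv (m : ℕ) :
    Equiv.Perm (Fin (m + 1)) × Fin (m + 2) ≃ Equiv.Perm (Fin (m + 2)) :=
  Equiv.ofBijective _ pins_bijective2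

lemma fiber_count (τ : Equiv.Perm (Fin (m + 1))) (j : ℕ) :
    (Finset.univ.filter fun p : Fin (m + 2) => ldes (pins p τ) = j + 1).card
      = if ldes τ = j + 1 then j + 2 else if ldes τ = j then m + 1 - j else 0 := by
  by_cases h1 : ldes τ = j + 1
  · rw [if_pos h1]
    have hset : (Finset.univ.filter fun p : Fin (m + 2) => ldes (pins p τ) = j + 1)
        = keepSet τ := by
      ext p
      simp only [Finset.mem_filter, Finset.mem_univ, true_and, ldes_pins]
      by_cases hp : p ∈ keepSet τ
      · simp [hp, h1]
      · simp only [hp, if_false, iff_false]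
        omega
    rw [hset, card_keepSet, h1]
  · by_cases h2 : ldes τ = j
    · rw [if_neg h1, if_pos h2]
      have hset : (Finset.univ.filter fun p : Fin (m + 2) => ldes (pins p τ) = j + 1)
          = Finset.univ \ keepSet τ := by
        ext p
        simp only [Finset.mem_filter, Finset.mem_univ, true_and, ldes_pins,
          Finset.mem_sdiff]
        by_cases hp : p ∈ keepSet τ
        · simp [hp]
          omega
        · simp [hp, h2]
      rw [hset, Finset.card_sdiff_of_subset (Finset.subset_univ _), card_keepSet, Finset.card_univ,
        Fintype.card_fin, h2]
      have : ldes τ ≤ m := by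
        have := Finset.card_filter_le (Finset.univ : Finset (Fin m))
          (fun i => τ i.succ < τ i.castSucc)
        simpa [ldes, Finset.card_univ] using this
      omega
    · rw [if_neg h1, if_neg h2]
      rw [Finset.card_eq_zero, Finset.filter_eq_empty_iff]
      intro p _
      rw [ldes_pins]
      by_cases hp : p ∈ keepSet τ
      · simp [hp]; omega
      · simp [hp]; omega

lemma linE_rec (m j : ℕ) :
    linE (m + 1) (j + 1) = (j + 2) * linE m (j + 1) + (m + 1 - j) * linE m j := by
  classical
  have step1 : linE (m + 1) (j + 1)
      = (Finset.univ.filter fun x : Equiv.Perm (Fin (m + 1)) × Fin (m + 2) =>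
          ldes (pins x.2 x.1) = j + 1).card := by
    unfold linE
    rw [← card_filter_equiv (pinsEquiv m) (fun σ : Equiv.Perm (Fin (m + 2)) => ldes σ = j + 1)]
    rfl
  rw [step1]
  rw [Finset.card_eq_sum_card_fiberwise
    (f := fun x : Equiv.Perm (Fin (m + 1)) × Fin (m + 2) => x.1)
    (t := (Finset.univ : Finset (Equiv.Perm (Fin (m + 1)))))
    (fun x _ => Finset.mem_univ _)]
  have hfib : ∀ τ : Equiv.Perm (Fin (m + 1)),
      ((Finset.univ.filter fun x : Equiv.Perm (Fin (m + 1)) × Fin (m + 2) =>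
          ldes (pins x.2 x.1) = j + 1).filter fun x => x.1 = τ).card
        = if ldes τ = j + 1 then j + 2 else if ldes τ = j then m + 1 - j else 0 := by
    intro τ
    rw [← fiber_count τ j]
    apply Finset.card_bij (fun x _ => x.2)
    · rintro ⟨τ', p⟩ hx
      simp only [Finset.mem_filter, Finset.mem_univ, true_and] at hx ⊢
      obtain ⟨h1, h2⟩ := hx
      subst h2
      exact h1
    · rintro ⟨τ1, p1⟩ h1 ⟨τ2, p2⟩ h2 he
      simp only [Finset.mem_filter] at h1 h2
      simp only at he
      ext
      · rw [h1.2, h2.2]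
      · exact congrArg Fin.val he
    · intro p hp
      simp only [Finset.mem_filter, Finset.mem_univ, true_and] at hp
      exact ⟨(τ, p), by simp [hp], rfl⟩
  rw [Finset.sum_congr rfl fun τ _ => hfib τ]
  rw [← Finset.sum_filter_add_sum_filter_not Finset.univ (fun τ => ldes τ = j + 1)]
  have hA : ∑ τ ∈ Finset.univ.filter (fun τ : Equiv.Perm (Fin (m + 1)) => ldes τ = j + 1),
      (if ldes τ = j + 1 then j + 2 else if ldes τ = j then m + 1 - j else 0)
        = (j + 2) * linE m (j + 1) := by
    rw [Finset.sum_congr rfl (fun τ hτ => by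
      rw [if_pos (Finset.mem_filter.mp hτ).2])]
    rw [Finset.sum_const, smul_eq_mul]
    unfold linE
    ring
  have hB : ∑ τ ∈ Finset.univ.filter (fun τ : Equiv.Perm (Fin (m + 1)) => ¬ldes τ = j + 1),
      (if ldes τ = j + 1 then j + 2 else if ldes τ = j then m + 1 - j else 0)
        = (m + 1 - j) * linE m j := by
    rw [Finset.sum_congr rfl (fun τ hτ => by
      rw [if_neg (Finset.mem_filter.mp hτ).2])]
    rw [← Finset.sum_filter]
    rw [Finset.filter_filter]
    have hset : (Finset.univ.filter fun τ : Equiv.Perm (Fin (m + 1)) =>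
        ¬ldes τ = j + 1 ∧ ldes τ = j)
        = Finset.univ.filter fun τ => ldes τ = j := by
      apply Finset.filter_congr
      intro τ _
      constructor
      · exact fun h => h.2
      · exact fun h => ⟨by omega, h⟩
    rw [hset, Finset.sum_const, smul_eq_mul]
    unfold linE
    ring
  rw [hA, hB]

end CircEulerianDevelopment


lemma circ_rec (n' l : ℕ) (hl : 1 ≤ l) :
    circEulerian (2 * (n' + 1) + 1) l
      = l * circEulerian (2 * (n' + 1)) l
        + (2 * (n' + 1) + 1 - l) * circEulerian (2 * (n' + 1)) (l - 1) := by
  have e1 : 2 * (n' + 1) + 1 = (2 * n' + 1) + 2 := by ring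
  have e2 : 2 * (n' + 1) = 2 * n' + 2 := by ring
  rw [e1, e2]
  match l, hl with
  | 1, _ =>
    rw [circEulerian_succ_succ (2 * n' + 1) 0, linE_zero]
    have e3 : (1 : ℕ) - 1 = 0 := rfl
    rw [e3, circEulerian_zero (2 * n'), circEulerian_succ_succ (2 * n') 0, linE_zero]
    ring
  | (l'' + 2), _ =>
    rw [circEulerian_succ_succ (2 * n' + 1) (l'' + 1)]
    have e4 : 2 * n' + 1 = (2 * n') + 1 := rfl
    rw [show (2:ℕ) * n' + 1 + 2 = ((2 * n') + 1) + 2 from rfl]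
    rw [circEulerian_succ_succ (2 * n') (l'' + 1)]
    have e5 : l'' + 2 - 1 = l'' + 1 := rfl
    rw [e5, circEulerian_succ_succ (2 * n') l'']
    have e6 : 2 * n' + 1 = (2 * n') + 1 := rfl
    rw [show (2 * n' : ℕ) + 1 = (2 * n') + 1 from rfl]
    have := linE_rec (2 * n') l''
    rw [this]
    have e7 : 2 * n' + 2 + 1 - (l'' + 2) = 2 * n' + 1 - l'' := by omega
    rw [e7]

lemma u_eq_two_t (j : ℕ) : uCoeff j j = 2 * tCoeff j j := by
  match j with
  | 0 => simp [uCoeff, tCoeff]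
  | (j' + 1) =>
    unfold uCoeff tCoeff
    rw [if_neg (by simp)]
    rw [Nat.sub_self]
    have hj : ((j' : ℝ) + 1) + ((j' : ℝ) + 1) ≠ 0 := by positivity
    push_cast
    field_simp
    ring

lemma core (ν : ℝ) (jj d : ℕ) :
    (-1 : ℝ) ^ (jj + d + 1) * uCoeff (jj + d + 1) jj * (ν - ((jj + d + 1 : ℕ) : ℝ))
      + (-1 : ℝ) ^ (jj + d) * uCoeff (jj + d) jj * (ν + ((jj + d + 1 : ℕ) : ℝ))
    = (ν - (jj : ℝ)) * (2 * ((-1 : ℝ) ^ (jj + d + 1) * tCoeff (jj + d + 1) jj)) := by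
  have hch : ((2 * jj + d + 1 : ℕ) : ℝ) * (Nat.choose (2 * jj + d) d : ℝ)
      = (Nat.choose (2 * jj + d + 1) (d + 1) : ℝ) * ((d + 1 : ℕ) : ℝ) := by
    exact_mod_cast congrArg (fun t : ℕ => (t : ℝ)) (Nat.add_one_mul_choose_eq (2 * jj + d) d)
  unfold uCoeff tCoeff
  rw [if_neg (by simp)]
  have e1 : jj + d + 1 - jj = d + 1 := by omega
  have e2 : jj + d - jj = d := by omega
  have e3 : jj + d + 1 + jj = 2 * jj + d + 1 := by omega
  have e4 : jj + d + jj = 2 * jj + d := by omega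
  rw [e1, e2, e3, e4]
  have hb : ((-1 : ℝ) ^ d) * ((-1 : ℝ) ^ d) = 1 := by
    rw [← pow_add]
    exact Even.neg_one_pow ⟨d, rfl⟩
  have hden : ((jj + d + 1 : ℕ) : ℝ) + (jj : ℝ) ≠ 0 := by positivity
  rw [pow_add, pow_add, pow_succ, pow_succ]
  push_cast
  push_cast at hch
  field_simp
  linear_combination (ν + (jj:ℝ) + (d:ℝ) + 1) * hch

lemma term_I (n' i' x : ℕ) (hx : x < i') (hin : i' + 1 ≤ n' + 1) :
    (-1 : ℝ) ^ (n' - x) * uCoeff (n' - x) (n' - i') * ((1 : ℝ) + (x : ℝ))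
      + (-1 : ℝ) ^ (n' - (x + 1)) * uCoeff (n' - (x + 1)) (n' - i')
        * ((2 * (n' + 1) + 1 - (1 + (x + 1)) : ℕ) : ℝ)
    = ((i' : ℝ) + 1) * (2 * ((-1 : ℝ) ^ (n' - x) * tCoeff (n' - x) (n' - i'))) := by
  have hii : i' ≤ n' := by omega
  obtain ⟨d, rfl⟩ : ∃ d, i' = x + 1 + d := ⟨i' - x - 1, by omega⟩
  obtain ⟨jj, rfl⟩ : ∃ jj, n' = x + 1 + d + jj := ⟨n' - (x + 1 + d), by omega⟩
  have hjje : x + 1 + d + jj - (x + 1 + d) = jj := by omega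
  rw [hjje]
  have h1 : x + 1 + d + jj - x = jj + d + 1 := by omega
  have h2 : x + 1 + d + jj - (x + 1) = jj + d := by omega
  have h3 : ((2 * ((x + 1 + d + jj) + 1) + 1 - (1 + (x + 1)) : ℕ) : ℝ)
      = (((x + 1 + d + jj : ℕ) : ℝ) + 1) + ((jj + d + 1 : ℕ) : ℝ) := by
    have e : (2 * ((x + 1 + d + jj) + 1) + 1 - (1 + (x + 1)) : ℕ)
        = ((x + 1 + d + jj) + 1) + (jj + d + 1) := by omega
    rw [e]; push_cast; ring
  have h4 : ((1 : ℝ) + (x : ℝ)) = (((x + 1 + d + jj : ℕ) : ℝ) + 1) - ((jj + d + 1 : ℕ) : ℝ) := by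
    push_cast; ring
  have h6 : (((x + 1 + d : ℕ) : ℝ) + 1) = (((x + 1 + d + jj : ℕ) : ℝ) + 1) - ((jj : ℕ) : ℝ) := by
    push_cast; ring
  rw [h1, h2, h3]
  push_cast
  have := core (((x : ℝ) + 1 + (d : ℝ) + (jj : ℝ)) + 1) jj d
  push_cast at this
  linarith [this]

/-- The combinatorial identity `b_{n,i} = i · a_{n,i}` for `n ≥ 1` and `1 ≤ i ≤ n`. -/
theorem bCoeff_eq_mul_aCoeff (n i : ℕ) (hn : 1 ≤ n) (hi1 : 1 ≤ i) (hin : i ≤ n) :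
    bCoeff n i = (i : ℝ) * aCoeff n i := by
  obtain ⟨n', rfl⟩ : ∃ n', n = n' + 1 := ⟨n - 1, by omega⟩
  obtain ⟨i', rfl⟩ : ∃ i', i = i' + 1 := ⟨i - 1, by omega⟩
  unfold bCoeff aCoeff
  rw [← Finset.Ico_add_one_right_eq_Icc, Finset.sum_Ico_eq_sum_range, Finset.sum_Ico_eq_sum_range]
  simp only [Nat.add_sub_cancel]
  -- rewrite the circular Eulerian numbers of odd order via the recurrence
  have hrec : ∀ x ∈ Finset.range (i' + 1),
      (-1 : ℝ) ^ (n' + 1 - (1 + x)) * uCoeff (n' + 1 - (1 + x)) (n' + 1 - (i' + 1))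
          * (circEulerian (2 * (n' + 1) + 1) (1 + x) : ℝ)
        = ((-1 : ℝ) ^ (n' - x) * uCoeff (n' - x) (n' - i')
              * ((1 : ℝ) + (x : ℝ)) * (circEulerian (2 * (n' + 1)) (1 + x) : ℝ))
          + ((-1 : ℝ) ^ (n' - x) * uCoeff (n' - x) (n' - i')
              * ((2 * (n' + 1) + 1 - (1 + x) : ℕ) : ℝ)
              * (circEulerian (2 * (n' + 1)) x : ℝ)) := by
    intro x hx
    have e1 : n' + 1 - (1 + x) = n' - x := by omega
    have e2 : n' + 1 - (i' + 1) = n' - i' := by omega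
    rw [e1, e2]
    have := circ_rec n' (1 + x) (by omega)
    rw [this]
    have e3 : 1 + x - 1 = x := by omega
    rw [e3]
    push_cast
    ring
  rw [Finset.sum_congr rfl hrec]
  rw [Finset.sum_add_distrib]
  -- second sum : shift the index down, first term vanishes
  have hzero : ((-1 : ℝ) ^ (n' - 0) * uCoeff (n' - 0) (n' - i')
      * ((2 * (n' + 1) + 1 - (1 + 0) : ℕ) : ℝ) * (circEulerian (2 * (n' + 1)) 0 : ℝ)) = 0 := by
    have : circEulerian (2 * (n' + 1)) 0 = 0 := by
      have e : 2 * (n' + 1) = 2 * n' + 2 := by ring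
      rw [e]
      exact circEulerian_zero (2 * n')
    rw [this]
    norm_num
  rw [Finset.sum_range_succ' (fun x => ((-1 : ℝ) ^ (n' - x) * uCoeff (n' - x) (n' - i')
      * ((2 * (n' + 1) + 1 - (1 + x) : ℕ) : ℝ) * (circEulerian (2 * (n' + 1)) x : ℝ))) i']
  rw [hzero, add_zero]
  -- first sum : split off the top term
  rw [Finset.sum_range_succ (fun x => ((-1 : ℝ) ^ (n' - x) * uCoeff (n' - x) (n' - i')
      * ((1 : ℝ) + (x : ℝ)) * (circEulerian (2 * (n' + 1)) (1 + x) : ℝ))) i']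
  -- right-hand side
  rw [Finset.mul_sum, Finset.mul_sum]
  rw [Finset.sum_range_succ (fun x => ((i' + 1 : ℕ) : ℝ) *
      (2 * ((-1 : ℝ) ^ (n' + 1 - (1 + x)) * tCoeff (n' + 1 - (1 + x)) (n' + 1 - (i' + 1))
        * (circEulerian (2 * (n' + 1)) (1 + x) : ℝ)))) i']
  have hAB : ∀ x ∈ Finset.range i',
      ((-1 : ℝ) ^ (n' - x) * uCoeff (n' - x) (n' - i') * ((1 : ℝ) + (x : ℝ))
          * (circEulerian (2 * (n' + 1)) (1 + x) : ℝ))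
        + ((-1 : ℝ) ^ (n' - (x + 1)) * uCoeff (n' - (x + 1)) (n' - i')
            * ((2 * (n' + 1) + 1 - (1 + (x + 1)) : ℕ) : ℝ)
            * (circEulerian (2 * (n' + 1)) (x + 1) : ℝ))
      = ((i' + 1 : ℕ) : ℝ) * (2 * ((-1 : ℝ) ^ (n' + 1 - (1 + x))
          * tCoeff (n' + 1 - (1 + x)) (n' + 1 - (i' + 1))
          * (circEulerian (2 * (n' + 1)) (1 + x) : ℝ))) := by
    intro x hx
    have e1 : n' + 1 - (1 + x) = n' - x := by omega
    have e2 : n' + 1 - (i' + 1) = n' - i' := by omega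
    rw [e1, e2, show circEulerian (2 * (n' + 1)) (x + 1)
        = circEulerian (2 * (n' + 1)) (1 + x) from by rw [Nat.add_comm x 1]]
    have h := term_I n' i' x (Finset.mem_range.mp hx) hin
    set C := (circEulerian (2 * (n' + 1)) (1 + x) : ℝ) with hC
    calc ((-1 : ℝ) ^ (n' - x) * uCoeff (n' - x) (n' - i') * ((1 : ℝ) + (x : ℝ)) * C)
          + ((-1 : ℝ) ^ (n' - (x + 1)) * uCoeff (n' - (x + 1)) (n' - i')
            * ((2 * (n' + 1) + 1 - (1 + (x + 1)) : ℕ) : ℝ) * C)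
        = (((-1 : ℝ) ^ (n' - x) * uCoeff (n' - x) (n' - i') * ((1 : ℝ) + (x : ℝ)))
          + ((-1 : ℝ) ^ (n' - (x + 1)) * uCoeff (n' - (x + 1)) (n' - i')
            * ((2 * (n' + 1) + 1 - (1 + (x + 1)) : ℕ) : ℝ))) * C := by ring
      _ = (((i' : ℝ) + 1) * (2 * ((-1 : ℝ) ^ (n' - x) * tCoeff (n' - x) (n' - i')))) * C := by
          rw [h]
      _ = ((i' + 1 : ℕ) : ℝ) * (2 * ((-1 : ℝ) ^ (n' - x) * tCoeff (n' - x) (n' - i') * C)) := by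
          push_cast; ring
  have hTop : ((-1 : ℝ) ^ (n' - i') * uCoeff (n' - i') (n' - i') * ((1 : ℝ) + (i' : ℝ))
        * (circEulerian (2 * (n' + 1)) (1 + i') : ℝ))
      = ((i' + 1 : ℕ) : ℝ) * (2 * ((-1 : ℝ) ^ (n' + 1 - (1 + i'))
          * tCoeff (n' + 1 - (1 + i')) (n' + 1 - (i' + 1))
          * (circEulerian (2 * (n' + 1)) (1 + i') : ℝ))) := by
    have e1 : n' + 1 - (1 + i') = n' - i' := by omega
    have e2 : n' + 1 - (i' + 1) = n' - i' := by omega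
    rw [e1, e2, u_eq_two_t (n' - i')]
    push_cast
    ring
  have hsum2 : (∑ x ∈ Finset.range i', ((-1 : ℝ) ^ (n' - x) * uCoeff (n' - x) (n' - i')
        * ((1 : ℝ) + (x : ℝ)) * (circEulerian (2 * (n' + 1)) (1 + x) : ℝ)))
      + (∑ x ∈ Finset.range i', ((-1 : ℝ) ^ (n' - (x + 1)) * uCoeff (n' - (x + 1)) (n' - i')
          * ((2 * (n' + 1) + 1 - (1 + (x + 1)) : ℕ) : ℝ)
          * (circEulerian (2 * (n' + 1)) (x + 1) : ℝ)))
      = ∑ x ∈ Finset.range i', ((i' + 1 : ℕ) : ℝ) * (2 * ((-1 : ℝ) ^ (n' + 1 - (1 + x))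
          * tCoeff (n' + 1 - (1 + x)) (n' + 1 - (i' + 1))
          * (circEulerian (2 * (n' + 1)) (1 + x) : ℝ))) := by
    rw [← Finset.sum_add_distrib]
    exact Finset.sum_congr rfl hAB
  linarith [hsum2, hTop]
end

section
/- For every integer n ≥ 1, lim_{N → ∞} (2/φ(N)) · ∑_{χ mod N, χ(−1) = (−1)^n} L(n, χ) = 1, where the sum runs over all Dirichlet characters modulo N whose parity satisfies χ(−1) = (−1)^n and φ is Euler's totient function. -/
open Finset Filter Real

namespace AvgLAux

open HurwitzZeta

variable {N : ℕ} [NeZero N]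

/-- The function `δ₁ + ε δ₋₁` on `ZMod N`. -/
noncomputable def Psi (N : ℕ) [NeZero N] (ε : ℂ) : ZMod N → ℂ :=
  fun k => (if k = 1 then 1 else 0) + ε * (if k = -1 then 1 else 0)

open scoped Classical in
lemma sum_filter_char (ε : ℂ) (hε : ε = 1 ∨ ε = -1) (j : ZMod N) :
    ∑ χ ∈ Finset.univ.filter (fun χ : DirichletCharacter ℂ N => χ (-1) = ε), χ j
      = (N.totient : ℂ) / 2 * Psi N ε j := by
  have hstep : ∀ χ : DirichletCharacter ℂ N,
      (if χ (-1) = ε then χ j else 0) = (χ j + ε * χ (-j)) / 2 := by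
    intro χ
    have hsq : χ (-1) * χ (-1) = 1 := by
      rw [← map_mul]
      norm_num
    have h1 : χ (-1) = 1 ∨ χ (-1) = -1 := mul_self_eq_one_iff.mp hsq
    have hneg : χ (-j) = χ (-1) * χ j := by
      rw [← map_mul]
      ring_nf
    split_ifs with h
    · rw [hneg, h]
      rcases hε with rfl | rfl <;> ring
    · have h2 : χ (-1) = -ε := by
        rcases hε with rfl | rfl <;> rcases h1 with h1 | h1 <;> simp_all
      rw [hneg, h2]
      rcases hε with rfl | rfl <;> ring
  rw [Finset.sum_filter]
  calc ∑ χ : DirichletCharacter ℂ N, (if χ (-1) = ε then χ j else 0)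
      = ∑ χ : DirichletCharacter ℂ N, (χ j + ε * χ (-j)) / 2 := by
        exact Finset.sum_congr rfl fun χ _ => hstep χ
    _ = ((∑ χ : DirichletCharacter ℂ N, χ j) + ε * ∑ χ : DirichletCharacter ℂ N, χ (-j)) / 2 := by
        rw [Finset.mul_sum, ← Finset.sum_add_distrib, Finset.sum_div]
    _ = (N.totient : ℂ) / 2 * Psi N ε j := by
        rw [DirichletCharacter.sum_characters_eq, DirichletCharacter.sum_characters_eq]
        simp only [Psi, neg_eq_iff_eq_neg]
        split_ifs <;> ring

open scoped Classical in
lemma sum_filter_LFunction (ε : ℂ) (hε : ε = 1 ∨ ε = -1) (s : ℂ) :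
    ∑ χ ∈ Finset.univ.filter (fun χ : DirichletCharacter ℂ N => χ (-1) = ε),
        DirichletCharacter.LFunction χ s
      = (N.totient : ℂ) / 2 * ZMod.LFunction (Psi N ε) s := by
  simp only [DirichletCharacter.LFunction, ZMod.LFunction]
  rw [← Finset.mul_sum, Finset.sum_comm]
  simp_rw [← Finset.sum_mul, sum_filter_char ε hε]
  simp_rw [Finset.mul_sum]
  exact Finset.sum_congr rfl fun j _ => by ring

lemma Psi_sum_eq (ε : ℂ) (s : ℂ) :
    ZMod.LFunction (Psi N ε) s
      = (N : ℂ) ^ (-s) * (hurwitzZeta (ZMod.toAddCircle (1 : ZMod N)) s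
          + ε * hurwitzZeta (ZMod.toAddCircle (-1 : ZMod N)) s) := by
  rw [ZMod.LFunction]
  congr 1
  have h : ∀ j : ZMod N, Psi N ε j * hurwitzZeta (ZMod.toAddCircle j) s
      = (if j = 1 then hurwitzZeta (ZMod.toAddCircle j) s else 0)
        + (if j = -1 then ε * hurwitzZeta (ZMod.toAddCircle j) s else 0) := by
    intro j
    simp only [Psi]
    split_ifs <;> ring
  simp_rw [h]
  rw [Finset.sum_add_distrib,
    Finset.sum_ite_eq' Finset.univ (1 : ZMod N) (fun j => hurwitzZeta (ZMod.toAddCircle j) s),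
    Finset.sum_ite_eq' Finset.univ (-1 : ZMod N)
      (fun j => ε * hurwitzZeta (ZMod.toAddCircle j) s)]
  simp

lemma Psi_sum_zero : ∑ j : ZMod N, Psi N (-1) j = 0 := by
  classical
  have h : ∀ j : ZMod N, Psi N (-1) j
      = (if j = 1 then (1:ℂ) else 0) + (if j = -1 then (-1:ℂ) else 0) := by
    intro j
    simp only [Psi]
    split_ifs <;> ring
  simp_rw [h]
  rw [Finset.sum_add_distrib, Finset.sum_ite_eq' Finset.univ (1 : ZMod N) (fun _ => (1:ℂ)),
    Finset.sum_ite_eq' Finset.univ (-1 : ZMod N) (fun _ => (-1:ℂ))]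
  simp


lemma toAddCircle_one (hN : 3 ≤ N) :
    ZMod.toAddCircle (1 : ZMod N) = ((1 / N : ℝ) : UnitAddCircle) := by
  haveI : Fact (1 < N) := ⟨by omega⟩
  rw [ZMod.toAddCircle_apply, ZMod.val_one]
  norm_num

lemma toAddCircle_neg_one (hN : 3 ≤ N) :
    ZMod.toAddCircle (-1 : ZMod N) = ((((N : ℝ) - 1) / N : ℝ) : UnitAddCircle) := by
  obtain ⟨m, rfl⟩ : ∃ m, N = m + 1 := ⟨N - 1, by omega⟩
  rw [ZMod.toAddCircle_apply, ZMod.val_neg_one]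
  push_cast
  norm_num

set_option maxHeartbeats 1000000 in
lemma key (hN : 3 ≤ N) (εr : ℝ) (hεr : εr = 1 ∨ εr = -1) {t : ℝ} (ht : 1 < t)
    (hcase : 2 ≤ t ∨ (εr = -1 ∧ t ≤ 2)) :
    ‖ZMod.LFunction (Psi N ((εr : ℝ) : ℂ)) ((t : ℝ) : ℂ) - 1‖ ≤ 6 / N := by
  have hN0 : (0:ℝ) < N := by positivity
  have hN1 : (1:ℝ) ≤ N := by exact_mod_cast Nat.one_le_iff_ne_zero.mpr (by omega)
  have hN3 : (3:ℝ) ≤ N := by exact_mod_cast hN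
  set a₁ : ℝ := 1 / N with ha₁
  set a₂ : ℝ := ((N : ℝ) - 1) / N with ha₂
  have ha₁0 : 0 < a₁ := by positivity
  have ha₂0 : 0 < a₂ := by rw [ha₂]; exact div_pos (by linarith) hN0
  have ha₁I : a₁ ∈ Set.Icc (0:ℝ) 1 := ⟨ha₁0.le, by rw [ha₁, div_le_one hN0]; linarith⟩
  have ha₂I : a₂ ∈ Set.Icc (0:ℝ) 1 := ⟨ha₂0.le, by rw [ha₂, div_le_one hN0]; linarith⟩
  have ha₁₂ : a₁ ≤ a₂ := by
    rw [ha₁, ha₂]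
    gcongr
    linarith
  have hre : 1 < ((t : ℝ) : ℂ).re := by simpa using ht
  have h1 := hasSum_hurwitzZeta_of_one_lt_re ha₁I hre
  have h2 := hasSum_hurwitzZeta_of_one_lt_re ha₂I hre
  have hL : HasSum (fun m : ℕ =>
      (N:ℂ)^(-(t:ℂ)) * (1 / ((m:ℂ) + (a₁ : ℂ)) ^ (t:ℂ)) +
        ((εr : ℝ) : ℂ) * ((N:ℂ)^(-(t:ℂ)) * (1 / ((m:ℂ) + (a₂ : ℂ)) ^ (t:ℂ))))
      (ZMod.LFunction (Psi N ((εr : ℝ) : ℂ)) ((t : ℝ) : ℂ)) := by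
    rw [Psi_sum_eq, toAddCircle_one hN, toAddCircle_neg_one hN]
    have hc := (h1.mul_left ((N:ℂ)^(-(t:ℂ)))).add
      ((h2.mul_left ((N:ℂ)^(-(t:ℂ)))).mul_left ((εr : ℝ) : ℂ))
    convert hc using 1
    · rfl
    · ring
  set u : ℕ → ℝ :=
    fun m => (N:ℝ)^(-t) * (((m:ℝ) + a₁)^(-t) + εr * (((m:ℝ) + a₂)^(-t))) with hu
  have hpt : ∀ m : ℕ, ((u m : ℝ) : ℂ)
      = (N:ℂ)^(-(t:ℂ)) * (1 / ((m:ℂ) + (a₁ : ℂ)) ^ (t:ℂ)) +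
        ((εr : ℝ) : ℂ) * ((N:ℂ)^(-(t:ℂ)) * (1 / ((m:ℂ) + (a₂ : ℂ)) ^ (t:ℂ))) := by
    intro m
    have hma : (0:ℝ) ≤ (m:ℝ) + a₁ := by
      have := Nat.cast_nonneg (α := ℝ) m
      linarith
    have hmb : (0:ℝ) ≤ (m:ℝ) + a₂ := by
      have := Nat.cast_nonneg (α := ℝ) m
      linarith
    have e0 : ((((N:ℝ)^(-t)) : ℝ) : ℂ) = (N:ℂ)^(-(t:ℂ)) := by
      rw [Complex.ofReal_cpow hN0.le]
      push_cast
      ring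
    have e1 : ((((m:ℝ) + a₁)^(-t) : ℝ) : ℂ) = 1 / ((m:ℂ) + (a₁ : ℂ))^(t:ℂ) := by
      rw [Complex.ofReal_cpow hma, Complex.ofReal_neg, Complex.cpow_neg, one_div]
      push_cast
      ring
    have e2 : ((((m:ℝ) + a₂)^(-t) : ℝ) : ℂ) = 1 / ((m:ℂ) + (a₂ : ℂ))^(t:ℂ) := by
      rw [Complex.ofReal_cpow hmb, Complex.ofReal_neg, Complex.cpow_neg, one_div]
      push_cast
      ring
    calc ((u m : ℝ) : ℂ)
        = (((N:ℝ)^(-t) : ℝ) : ℂ) * (((((m:ℝ) + a₁)^(-t) : ℝ) : ℂ)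
            + ((εr : ℝ) : ℂ) * ((((m:ℝ) + a₂)^(-t) : ℝ) : ℂ)) := by
          rw [hu]
          push_cast
          ring
      _ = _ := by rw [e0, e1, e2]; ring
  have sA : Summable (fun m : ℕ => ((m:ℝ) + a₁)^(-t)) := by
    refine ((Real.summable_one_div_nat_add_rpow a₁ t).mpr ht).congr fun m => ?_
    have hma : (0:ℝ) ≤ (m:ℝ) + a₁ := by
      have := Nat.cast_nonneg (α := ℝ) m
      linarith
    rw [_root_.abs_of_nonneg hma, one_div, ← Real.rpow_neg hma]
  have sB : Summable (fun m : ℕ => ((m:ℝ) + a₂)^(-t)) := by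
    refine ((Real.summable_one_div_nat_add_rpow a₂ t).mpr ht).congr fun m => ?_
    have hmb : (0:ℝ) ≤ (m:ℝ) + a₂ := by
      have := Nat.cast_nonneg (α := ℝ) m
      linarith
    rw [_root_.abs_of_nonneg hmb, one_div, ← Real.rpow_neg hmb]
  have su : Summable u := by
    rw [hu]
    exact ((sA.add (sB.mul_left εr)).mul_left _)
  have hC : HasSum (fun m => ((u m : ℝ) : ℂ)) (((∑' m, u m : ℝ) : ℝ) : ℂ) :=
    Complex.hasSum_ofReal.mpr su.hasSum
  rw [show (fun m => ((u m : ℝ) : ℂ)) = _ from funext hpt] at hC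
  have hLval : ZMod.LFunction (Psi N ((εr : ℝ) : ℂ)) ((t : ℝ) : ℂ) = ((∑' m, u m : ℝ) : ℂ) :=
    hL.unique hC
  rw [hLval, show (1:ℂ) = ((1:ℝ) : ℂ) by norm_num, ← Complex.ofReal_sub, Complex.norm_real,
    Real.norm_eq_abs]
  -- now a real estimate
  have hcbound : (N:ℝ)^(-t) ≤ 1 / N := by
    have h := Real.rpow_le_rpow_of_exponent_le hN1 (by linarith : -t ≤ -1)
    rwa [Real.rpow_neg_one, inv_eq_one_div] at h
  have hcpos : (0:ℝ) < (N:ℝ)^(-t) := Real.rpow_pos_of_pos hN0 _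
  have hu0 : u 0 = 1 + εr * ((N:ℝ) - 1)^(-t) := by
    have e1 : (N:ℝ)^(-t) * a₁^(-t) = 1 := by
      rw [← Real.mul_rpow hN0.le ha₁0.le, ha₁, mul_one_div_cancel hN0.ne', Real.one_rpow]
    have e2 : (N:ℝ)^(-t) * a₂^(-t) = ((N:ℝ) - 1)^(-t) := by
      rw [← Real.mul_rpow hN0.le ha₂0.le, ha₂, mul_div_cancel₀ _ hN0.ne']
    calc u 0 = (N:ℝ)^(-t) * a₁^(-t) + εr * ((N:ℝ)^(-t) * a₂^(-t)) := by
          rw [hu]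
          simp only [Nat.cast_zero, zero_add]
          ring
      _ = 1 + εr * ((N:ℝ) - 1)^(-t) := by rw [e1, e2]
  have habs_eps : |εr| = 1 := by rcases hεr with rfl | rfl <;> norm_num
  have hfirst : |u 0 - 1| ≤ 2 / N := by
    rw [hu0]
    have h1' : |1 + εr * ((N:ℝ) - 1)^(-t) - 1| = ((N:ℝ) - 1)^(-t) := by
      rw [add_sub_cancel_left, abs_mul, habs_eps, one_mul,
        _root_.abs_of_nonneg (Real.rpow_nonneg (by linarith) _)]
    rw [h1']
    have h2' : ((N:ℝ) - 1)^(-t) ≤ ((N:ℝ) - 1)^(-1 : ℝ) :=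
      Real.rpow_le_rpow_of_exponent_le (by linarith) (by linarith)
    have h3' : ((N:ℝ) - 1)^(-1 : ℝ) = ((N:ℝ) - 1)⁻¹ := Real.rpow_neg_one _
    have h4' : ((N:ℝ) - 1)⁻¹ ≤ 2 / N := by
      rw [inv_eq_one_div, div_le_div_iff₀ (by linarith) hN0]
      linarith
    linarith
  have hterm : ∀ m : ℕ, |u (m+1)| ≤ 2 / N * (1 / ((m:ℝ)+1)^2) := by
    intro m
    set k : ℝ := (m:ℝ) + 1 with hk
    have hm0 : (0:ℝ) ≤ (m:ℝ) := Nat.cast_nonneg m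
    have hk1 : (1:ℝ) ≤ k := by rw [hk]; linarith
    have hk0 : (0:ℝ) < k := by linarith
    have hα : (0:ℝ) < k + a₁ := by linarith
    have hβ : (0:ℝ) < k + a₂ := by linarith
    have hβk : k ≤ k + a₂ := by linarith
    have hαk : k ≤ k + a₁ := by linarith
    have hcast : ((m + 1 : ℕ) : ℝ) = k := by rw [hk]; push_cast; ring
    have base_le : ∀ {x : ℝ}, 0 < x → k ≤ x → x^(-t) ≤ 1 / k^2 * k := by
      intro x hx hkx
      have h1' : x^(-t) ≤ k^(-t) := by
        rw [Real.rpow_neg hx.le, Real.rpow_neg hk0.le]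
        exact inv_anti₀ (Real.rpow_pos_of_pos hk0 _)
          (Real.rpow_le_rpow hk0.le hkx (by linarith))
      have h2' : k^(-t) ≤ k^(-1:ℝ) :=
        Real.rpow_le_rpow_of_exponent_le hk1 (by linarith)
      rw [Real.rpow_neg_one] at h2'
      have : k⁻¹ = 1 / k^2 * k := by field_simp
      linarith
    -- bound on |A ± B|
    have hmain : |(k + a₁)^(-t) + εr * ((k + a₂)^(-t))| ≤ 2 / k^2 := by
      have hA0 : (0:ℝ) ≤ (k + a₁)^(-t) := Real.rpow_nonneg hα.le _
      have hB0 : (0:ℝ) ≤ (k + a₂)^(-t) := Real.rpow_nonneg hβ.le _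
      have hAk : (k + a₁)^(-t) ≤ k^(-t) := by
        rw [Real.rpow_neg hα.le, Real.rpow_neg hk0.le]
        exact inv_anti₀ (Real.rpow_pos_of_pos hk0 _)
          (Real.rpow_le_rpow hk0.le (by linarith) (by linarith))
      rcases hcase with ht2 | ⟨hε, ht2⟩
      · -- crude bound, 2 ≤ t
        have hkt : k^(-t) ≤ k^(-2:ℝ) :=
          Real.rpow_le_rpow_of_exponent_le hk1 (by linarith)
        have hk2 : k^(-2:ℝ) = 1 / k^2 := by
          rw [Real.rpow_neg hk0.le, show ((2:ℝ)) = ((2:ℕ):ℝ) by norm_num,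
            Real.rpow_natCast, one_div]
        have hBk : (k + a₂)^(-t) ≤ k^(-t) := by
          rw [Real.rpow_neg hβ.le, Real.rpow_neg hk0.le]
          exact inv_anti₀ (Real.rpow_pos_of_pos hk0 _)
            (Real.rpow_le_rpow hk0.le (by linarith) (by linarith))
        calc |(k + a₁)^(-t) + εr * ((k + a₂)^(-t))|
            ≤ |(k + a₁)^(-t)| + |εr * ((k + a₂)^(-t))| := abs_add_le _ _
          _ = (k + a₁)^(-t) + (k + a₂)^(-t) := by
              rw [abs_mul, habs_eps, one_mul, _root_.abs_of_nonneg hA0, _root_.abs_of_nonneg hB0]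
          _ ≤ 1 / k^2 + 1 / k^2 := by
              have := hAk.trans (hkt.trans_eq hk2)
              have := hBk.trans (hkt.trans_eq hk2)
              linarith
          _ = 2 / k^2 := by ring
      · -- pairing bound, εr = -1, 1 < t ≤ 2
        subst hε
        set A := (k + a₁)^(-t) with hA
        set B := (k + a₂)^(-t) with hB
        set x := (k + a₁) / (k + a₂) with hx
        have hx0 : 0 < x := by positivity
        have hx1 : x ≤ 1 := by
          rw [hx, div_le_one hβ]
          linarith
        have hBA : B = A * x^t := by
          rw [hA, hB, hx, Real.div_rpow hα.le hβ.le, Real.rpow_neg hα.le, Real.rpow_neg hβ.le]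
          field_simp
        have hxt : x^(2:ℝ) ≤ x^t := Real.rpow_le_rpow_of_exponent_ge hx0 hx1 ht2
        have hx2 : x^(2:ℝ) = x^2 := by
          rw [show ((2:ℝ)) = ((2:ℕ):ℝ) by norm_num, Real.rpow_natCast]
        rw [hx2] at hxt
        have hxt' : x^2 ≤ x^t := hxt
        have hxle : 1 - x^t ≤ 2 * (1 - x) := by
          have hsq : (0:ℝ) ≤ (1 - x)^2 := sq_nonneg _
          have hexp : (1 - x)^2 = 1 - 2*x + x^2 := by ring
          linarith [hxt']
        have hxub : 1 - x ≤ 1 / k := by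
          have heq : 1 - x = (a₂ - a₁) / (k + a₂) := by
            rw [hx]
            field_simp
            ring
          rw [heq]
          have h1' : a₂ - a₁ ≤ 1 := by
            have := ha₂I.2
            linarith
          exact div_le_div₀ (by norm_num) h1' hk0 (by linarith)
        have h1x : 0 ≤ 1 - x^t := by
          have := Real.rpow_le_one hx0.le hx1 (by linarith : (0:ℝ) ≤ t)
          linarith
        have hAk1 : A ≤ 1/k := by
          have h2' : k^(-t) ≤ k^(-1:ℝ) := Real.rpow_le_rpow_of_exponent_le hk1 (by linarith)
          rw [Real.rpow_neg_one] at h2'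
          calc A ≤ k^(-t) := hAk
            _ ≤ k⁻¹ := h2'
            _ = 1/k := (one_div k).symm
        have hfin : A - B ≤ 2 / k^2 := by
          have hAB : A - B = A * (1 - x^t) := by rw [hBA]; ring
          have hstep : A * (1 - x^t) ≤ (1/k) * (2 * (1/k)) := by
            apply mul_le_mul hAk1 ?_ h1x (by positivity)
            calc 1 - x^t ≤ 2*(1-x) := hxle
              _ ≤ 2*(1/k) := by linarith
          rw [hAB]
          calc A * (1-x^t) ≤ (1/k)*(2*(1/k)) := hstep
            _ = 2/k^2 := by
              field_simp
        have hABnn : 0 ≤ A - B := by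
          have hxt1 : x^t ≤ 1 := Real.rpow_le_one hx0.le hx1 (by linarith)
          nlinarith [hA0]
        rw [show (k + a₁)^(-t) + (-1:ℝ) * ((k + a₂)^(-t)) = A - B by rw [hA, hB]; ring,
          _root_.abs_of_nonneg hABnn]
        exact hfin
    have huval : |u (m+1)| = (N:ℝ)^(-t) * |(k + a₁)^(-t) + εr * ((k + a₂)^(-t))| := by
      rw [hu]
      simp only [hcast]
      rw [abs_mul, _root_.abs_of_pos hcpos]
    calc |u (m+1)| = (N:ℝ)^(-t) * |(k + a₁)^(-t) + εr * ((k + a₂)^(-t))| := huval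
      _ ≤ (1/N) * (2/k^2) := mul_le_mul hcbound hmain (abs_nonneg _) (by positivity)
      _ = 2 / N * (1 / k^2) := by ring
  have S2 : HasSum (fun m : ℕ => 1 / ((m:ℝ)+1)^2) (π^2/6) := by
    have h := (hasSum_nat_add_iff' (f := fun n : ℕ => (1:ℝ)/(n:ℝ)^2) 1).mpr hasSum_zeta_two
    simpa using h
  have su1 : Summable (fun m : ℕ => u (m+1)) := (summable_nat_add_iff 1).mpr su
  have su1a : Summable (fun m : ℕ => |u (m+1)|) := by
    simpa [Real.norm_eq_abs] using summable_norm_iff.mpr su1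
  have hpis : π^2/6 ≤ 2 := by nlinarith [Real.pi_lt_d2, Real.pi_pos]
  have htail : |∑' m, u (m+1)| ≤ 4 / N := by
    have h1' : |∑' m, u (m+1)| ≤ ∑' m, |u (m+1)| := by
      simpa [Real.norm_eq_abs] using norm_tsum_le_tsum_norm
        (by simpa [Real.norm_eq_abs] using su1a : Summable fun m : ℕ => ‖u (m+1)‖)
    have h2' : ∑' m, |u (m+1)| ≤ ∑' m : ℕ, 2/N * (1 / ((m:ℝ)+1)^2) :=
      Summable.tsum_le_tsum hterm su1a ((S2.summable).mul_left _)
    have h3' : ∑' m : ℕ, 2/N * (1 / ((m:ℝ)+1)^2) = 2/N * (π^2/6) := (S2.mul_left ((2:ℝ)/N)).tsum_eq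
    have h4' : 2/N * (π^2/6) ≤ 2/N * 2 := mul_le_mul_of_nonneg_left hpis (by positivity)
    have h5' : (2:ℝ)/N * 2 = 4/N := by ring
    linarith
  have hsplit : ∑' m, u m = u 0 + ∑' m, u (m+1) := Summable.tsum_eq_zero_add su
  rw [hsplit, show u 0 + (∑' m, u (m+1)) - 1 = (u 0 - 1) + (∑' m, u (m+1)) by ring]
  calc |(u 0 - 1) + (∑' m, u (m+1))| ≤ |u 0 - 1| + |∑' m, u (m+1)| := abs_add_le _ _
    _ ≤ 2/N + 4/N := add_le_add hfirst htail
    _ = 6/N := by ring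


lemma key_one (hN : 3 ≤ N) :
    ‖ZMod.LFunction (Psi N (((-1:ℝ) : ℝ) : ℂ)) 1 - 1‖ ≤ 6 / N := by
  have hsum : ∑ j : ZMod N, Psi N (((-1:ℝ) : ℝ) : ℂ) j = 0 := by
    have h : (((-1:ℝ) : ℝ) : ℂ) = (-1 : ℂ) := by norm_num
    rw [h]
    exact Psi_sum_zero
  have hcont : ContinuousAt (ZMod.LFunction (Psi N (((-1:ℝ) : ℝ) : ℂ))) 1 :=
    (ZMod.differentiableAt_LFunction (Psi N (((-1:ℝ) : ℝ) : ℂ)) 1 (Or.inr hsum)).continuousAt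
  have hofreal : Tendsto (fun t : ℝ => ((t : ℝ) : ℂ)) (nhdsWithin 1 (Set.Ioi 1)) (nhds (1:ℂ)) := by
    have h := Complex.continuous_ofReal.tendsto (1:ℝ)
    simpa using h.mono_left nhdsWithin_le_nhds
  have hT : Tendsto (fun t : ℝ => ‖ZMod.LFunction (Psi N (((-1:ℝ) : ℝ) : ℂ)) ((t:ℝ):ℂ) - 1‖)
      (nhdsWithin 1 (Set.Ioi 1))
      (nhds ‖ZMod.LFunction (Psi N (((-1:ℝ) : ℝ) : ℂ)) 1 - 1‖) :=
    ((hcont.tendsto.comp hofreal).sub tendsto_const_nhds).norm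
  refine le_of_tendsto hT ?_
  filter_upwards [Ioc_mem_nhdsGT_of_mem (Set.left_mem_Ico.mpr (by norm_num : (1:ℝ) < 2))]
    with t htt
  exact key hN (-1) (Or.inr rfl) htt.1 (Or.inr ⟨rfl, htt.2⟩)

open scoped Classical in
lemma avg_eq (ε : ℂ) (hε : ε = 1 ∨ ε = -1) (s : ℂ) :
    (2 / (N.totient : ℂ)) *
        ∑ χ ∈ Finset.univ.filter (fun χ : DirichletCharacter ℂ N => χ (-1) = ε),
          DirichletCharacter.LFunction χ s
      = ZMod.LFunction (Psi N ε) s := by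
  rw [sum_filter_LFunction ε hε s]
  have h0 : (N.totient : ℂ) ≠ 0 :=
    Nat.cast_ne_zero.mpr (Nat.totient_pos.mpr (NeZero.pos N)).ne'
  field_simp

end AvgLAux

open scoped Classical in
/-- For every `n ≥ 1`, `lim_{N → ∞} (2/φ(N)) ∑_{χ mod N, χ(-1)=(-1)^n} L(n,χ) = 1` (the limit
over moduli `N` is expressed via the shifted sequence `N = M + 1`). -/
theorem average_LFunction_tendsto_one (n : ℕ) (hn : 1 ≤ n) :
    Filter.Tendsto
      (fun M : ℕ =>
        (2 / (Nat.totient (M + 1) : ℂ)) *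
          ∑ χ ∈ Finset.univ.filter
              (fun χ : DirichletCharacter ℂ (M + 1) => χ (-1) = (-1) ^ n),
            DirichletCharacter.LFunction χ ((n : ℕ) : ℂ))
      Filter.atTop (nhds 1) := by
  have hεr : ((-1:ℝ)^n : ℝ) = 1 ∨ ((-1:ℝ)^n : ℝ) = -1 := by
    rcases Nat.even_or_odd n with h | h
    · left; rw [h.neg_one_pow]
    · right; rw [h.neg_one_pow]
  have hεcast : ((((-1:ℝ)^n : ℝ)) : ℂ) = (-1 : ℂ)^n := by push_cast; ring
  have hεC : ((((-1:ℝ)^n : ℝ)) : ℂ) = 1 ∨ ((((-1:ℝ)^n : ℝ)) : ℂ) = -1 := by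
    rcases hεr with h | h <;> rw [h] <;> [left; right] <;> norm_num
  rw [← tendsto_sub_nhds_zero_iff]
  refine squeeze_zero_norm' (a := fun M : ℕ => 6 / ((M:ℝ)+1)) ?_ ?_
  · filter_upwards [eventually_ge_atTop 2] with M hM
    have h3 : 3 ≤ M + 1 := by omega
    rw [← hεcast, AvgLAux.avg_eq (N := M+1) _ hεC]
    rcases eq_or_lt_of_le hn with h1 | h2
    · -- n = 1
      have hε1 : ((-1:ℝ)^n : ℝ) = -1 := by rw [← h1]; norm_num
      have hcast1 : ((n : ℕ) : ℂ) = 1 := by rw [← h1]; norm_num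
      rw [hε1, hcast1]
      have h := AvgLAux.key_one (N := M+1) h3
      convert h using 2
      push_cast
      ring
    · -- 2 ≤ n
      have ht : (1:ℝ) < (n:ℝ) := by exact_mod_cast h2
      have ht2 : (2:ℝ) ≤ (n:ℝ) := by exact_mod_cast h2
      have hcastn : ((n : ℕ) : ℂ) = (((n:ℝ) : ℝ) : ℂ) := by push_cast; ring
      rw [hcastn]
      have h := AvgLAux.key (N := M+1) h3 ((-1:ℝ)^n) hεr ht (Or.inl ht2)
      convert h using 2
      push_cast
      ring
  · have h := tendsto_one_div_add_atTop_nhds_zero_nat.const_mul (6:ℝ)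
    simpa [mul_one_div, div_eq_mul_inv] using h
end
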